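/- Let (V,w) be a weighted graph, let 0 < ε ≤ 1/2, let V' ⊆ V, and let k ≥ 1 be an integer with 2k ≤ |V'| ≤ k/ε. Suppose that every unordered pair {u,v} with w(u,v) > 0 has at least one endpoint in V'. Then there exists S ⊆ V' with |S| = k such that δ_w(S) ≥ ε · Σ_{{u,v}} w(u,v), where the sum is over all unordered pairs of distinct vertices (i.e., the cut value of some feasible k-set is at least an ε fraction of the total edge weight). (Lemma 3.2, part 2.) -/

import Mathlib

open Finset

/-- The cut value of a set `S`: total weight of pairs with exactly one endpoint in `S`. -/
noncomputable def cutVal {V : Type*} [Fintype V] [DecidableEq V]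
    (w : V → V → ℝ) (S : Finset V) : ℝ :=
  ∑ u ∈ S, ∑ v ∈ Sᶜ, w u v

/-- The total edge weight: the sum of `w(u,v)` over unordered pairs of distinct vertices. -/
noncomputable def totalWeight {V : Type*} [Fintype V] [DecidableEq V]
    (w : V → V → ℝ) : ℝ :=
  (∑ u, ∑ v ∈ Finset.univ.erase u, w u v) / 2

/-- counting k-subsets of s containing u and avoiding v -/
lemma count_cut {V : Type*} [DecidableEq V] (s : Finset V) (k : ℕ) (u v : V)
    (hk : 1 ≤ k) (hu : u ∈ s) (huv : u ≠ v) :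
    ((s.powersetCard k).filter (fun S => u ∈ S ∧ v ∉ S)).card
      = (((s.erase v).erase u).card).choose (k - 1) := by
  rw [← card_powersetCard]
  refine Finset.card_bij' (fun S _ => S.erase u) (fun T _ => insert u T) ?_ ?_ ?_ ?_
  · intro S hS
    simp only [mem_filter, mem_powersetCard] at hS
    obtain ⟨⟨hsub, hcard⟩, huS, hvS⟩ := hS
    rw [mem_powersetCard]
    constructor
    · intro x hx
      rw [mem_erase] at hx
      refine mem_erase.2 ⟨hx.1, mem_erase.2 ⟨?_, hsub hx.2⟩⟩
      rintro rfl; exact hvS hx.2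
    · rw [card_erase_of_mem huS, hcard]
  · intro T hT
    rw [mem_powersetCard] at hT
    obtain ⟨hsub, hcard⟩ := hT
    have huT : u ∉ T := fun h => (mem_erase.1 (hsub h)).1 rfl
    simp only [mem_filter, mem_powersetCard]
    refine ⟨⟨?_, ?_⟩, mem_insert_self _ _, ?_⟩
    · intro x hx
      rcases mem_insert.1 hx with rfl | hx
      · exact hu
      · exact mem_of_mem_erase (mem_of_mem_erase (hsub hx))
    · rw [card_insert_of_notMem huT, hcard]
      omega
    · rw [mem_insert]
      rintro (rfl | hv)
      · exact huv rfl
      · exact (mem_erase.1 (mem_of_mem_erase (hsub hv))).1 rfl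
  · intro S hS
    simp only [mem_filter] at hS
    exact insert_erase hS.2.1
  · intro T hT
    rw [mem_powersetCard] at hT
    exact erase_insert (fun h => (mem_erase.1 (hT.1 h)).1 rfl)

lemma cutVal_eq_double {V : Type*} [Fintype V] [DecidableEq V]
    (w : V → V → ℝ) (S : Finset V) :
    cutVal w S = ∑ u, ∑ v, if u ∈ S ∧ v ∉ S then w u v else 0 := by
  unfold cutVal
  rw [← Finset.sum_filter_add_sum_filter_not univ (· ∈ S)]
  have h1 : ∀ u ∈ univ.filter (· ∈ S), (∑ v, if u ∈ S ∧ v ∉ S then w u v else 0)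
      = ∑ v ∈ Sᶜ, w u v := by
    intro u hu
    rw [mem_filter] at hu
    simp only [hu.2, true_and]
    rw [← Finset.sum_filter]
    congr 1
    ext v
    simp [mem_compl]
  have h2 : ∀ u ∈ univ.filter (· ∉ S), (∑ v, if u ∈ S ∧ v ∉ S then w u v else 0) = 0 := by
    intro u hu
    rw [mem_filter] at hu
    simp [hu.2]
  rw [Finset.sum_congr rfl h1, Finset.sum_congr rfl h2, Finset.sum_const, smul_zero, add_zero]
  congr 1
  ext u; simp

lemma sum_cutVal {V : Type*} [Fintype V] [DecidableEq V]
    (w : V → V → ℝ) (s : Finset V) (k : ℕ) :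
    ∑ S ∈ s.powersetCard k, cutVal w S
      = ∑ u, ∑ v, (((s.powersetCard k).filter (fun S => u ∈ S ∧ v ∉ S)).card : ℝ) * w u v := by
  simp only [cutVal_eq_double]
  rw [Finset.sum_comm]
  refine Finset.sum_congr rfl fun u _ => ?_
  rw [Finset.sum_comm]
  refine Finset.sum_congr rfl fun v _ => ?_
  rw [← Finset.sum_filter, Finset.sum_const, nsmul_eq_mul]

lemma choose_ineq1 (n k : ℕ) (hk : 1 ≤ k) (hn : 2 * k ≤ n) (ε : ℝ) (h : ε * n ≤ k) :
    ε * (n.choose k : ℝ) ≤ ((n - 1).choose (k - 1) : ℝ) := by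
  have hn1 : 1 ≤ n := by omega
  obtain ⟨m, rfl⟩ : ∃ m, n = m + 1 := ⟨n - 1, by omega⟩
  obtain ⟨j, rfl⟩ : ∃ j, k = j + 1 := ⟨k - 1, by omega⟩
  have hid : (m + 1) * m.choose j = (m + 1).choose (j + 1) * (j + 1) :=
    Nat.add_one_mul_choose_eq m j
  simp only [Nat.add_sub_cancel]
  have hpos : (0 : ℝ) < (m + 1 : ℕ) := by positivity
  rw [← mul_le_mul_iff_of_pos_right hpos]
  have hcast : ((m).choose j : ℝ) * (m + 1 : ℕ) = ((m + 1).choose (j + 1) : ℝ) * (j + 1 : ℕ) := by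
    rw [mul_comm]
    exact_mod_cast congrArg (Nat.cast : ℕ → ℝ) hid
  rw [hcast]
  have : ε * ((m + 1 : ℕ) : ℝ) ≤ ((j + 1 : ℕ) : ℝ) := by exact_mod_cast h
  calc ε * ((m + 1).choose (j + 1) : ℝ) * ((m + 1 : ℕ) : ℝ)
      = ((m + 1).choose (j + 1) : ℝ) * (ε * ((m + 1 : ℕ) : ℝ)) := by ring
    _ ≤ ((m + 1).choose (j + 1) : ℝ) * ((j + 1 : ℕ) : ℝ) := by
        apply mul_le_mul_of_nonneg_left this (by positivity)

lemma choose_ineq2 (n k : ℕ) (hk : 1 ≤ k) (hn : 2 * k ≤ n) (ε : ℝ) (hε0 : 0 ≤ ε)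
    (h : ε * n ≤ k) :
    ε * (n.choose k : ℝ) ≤ 2 * ((n - 2).choose (k - 1) : ℝ) := by
  have h1 := choose_ineq1 n k hk hn ε h
  have key : ((n - 1).choose (k - 1)) ≤ 2 * ((n - 2).choose (k - 1)) := by
    have hid : (n - 2).choose (k - 1) * (n - 2 + 1) =
        (n - 2 + 1).choose (k - 1) * (n - 2 + 1 - (k - 1)) :=
      Nat.choose_mul_succ_eq (n - 2) (k - 1)
    have e1 : n - 2 + 1 = n - 1 := by omega
    have e2 : n - 1 - (k - 1) = n - k := by omega
    rw [e1, e2] at hid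
    have hle : (n - 1).choose (k - 1) * (n - 1) ≤ 2 * (n - 2).choose (k - 1) * (n - 1) := by
      calc (n - 1).choose (k - 1) * (n - 1) ≤ (n - 1).choose (k - 1) * (2 * (n - k)) :=
            Nat.mul_le_mul_left _ (by omega)
        _ = 2 * ((n - 2).choose (k - 1) * (n - 1)) := by rw [hid]; ring
        _ = 2 * (n - 2).choose (k - 1) * (n - 1) := by ring
    exact Nat.le_of_mul_le_mul_right hle (by omega)
  calc ε * (n.choose k : ℝ) ≤ ((n - 1).choose (k - 1) : ℝ) := h1
    _ ≤ 2 * ((n - 2).choose (k - 1) : ℝ) := by exact_mod_cast key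

/-- Lemma 3.2, part 2: if every positive-weight pair has an endpoint in `V'` and
`2k ≤ |V'| ≤ k/ε`, then some `k`-subset of `V'` cuts at least an `ε` fraction of the
total edge weight. -/
theorem kernel_opt_fraction {V : Type*} [Fintype V] [DecidableEq V]
    (w : V → V → ℝ) (hsymm : ∀ u v, w u v = w v u) (hnonneg : ∀ u v, 0 ≤ w u v)
    (ε : ℝ) (hε0 : 0 < ε) (hε : ε ≤ 1 / 2)
    (V' : Finset V) (k : ℕ) (hk : 1 ≤ k)
    (hlow : 2 * k ≤ V'.card) (hhigh : (V'.card : ℝ) ≤ (k : ℝ) / ε)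
    (hcover : ∀ u v : V, u ≠ v → 0 < w u v → u ∈ V' ∨ v ∈ V') :
    ∃ S ⊆ V', S.card = k ∧ ε * totalWeight w ≤ cutVal w S := by
  set n := V'.card with hn
  set P := V'.powersetCard k with hP
  have hkn : k ≤ n := by omega
  have hεn : ε * (n : ℝ) ≤ (k : ℝ) := by
    rw [mul_comm]
    exact (le_div_iff₀ hε0).mp hhigh
  set N : V → V → ℝ := fun u v => ((P.filter (fun S => u ∈ S ∧ v ∉ S)).card : ℝ) with hN
  -- key pointwise bound
  have key : ∀ u v : V, u ≠ v → u ∈ V' → 0 < w u v →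
      ε * (n.choose k : ℝ) ≤ N u v + N v u := by
    intro u v huv hu hw
    have hcount := count_cut V' k u v hk hu huv
    by_cases hv : v ∈ V'
    · have hcount' := count_cut V' k v u hk hv (Ne.symm huv)
      have hc : ((V'.erase v).erase u).card = n - 2 := by
        rw [card_erase_of_mem (mem_erase.2 ⟨huv, hu⟩), card_erase_of_mem hv]; omega
      have hc' : ((V'.erase u).erase v).card = n - 2 := by
        rw [card_erase_of_mem (mem_erase.2 ⟨Ne.symm huv, hv⟩), card_erase_of_mem hu]; omega
      rw [hN]
      simp only []
      rw [hcount, hcount', hc, hc']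
      have := choose_ineq2 n k hk hlow ε hε0.le hεn
      push_cast
      linarith
    · have hc : ((V'.erase v).erase u).card = n - 1 := by
        rw [erase_eq_of_notMem hv, card_erase_of_mem hu]
      have h1 := choose_ineq1 n k hk hlow ε hεn
      have hnn : (0 : ℝ) ≤ N v u := Nat.cast_nonneg _
      rw [hN]
      simp only []
      rw [hcount, hc]
      linarith
  -- pointwise with weights
  have key2 : ∀ u v : V, u ≠ v →
      ε * (n.choose k : ℝ) * w u v ≤ N u v * w u v + N v u * w v u := by
    intro u v huv
    rcases (hnonneg u v).eq_or_lt with h0 | hw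
    · rw [← h0, ← hsymm u v, ← h0]
      simp
    · have hcov := hcover u v huv hw
      have hkey : ε * (n.choose k : ℝ) ≤ N u v + N v u := by
        rcases hcov with hu | hv
        · exact key u v huv hu hw
        · have := key v u (Ne.symm huv) hv (by rw [← hsymm]; exact hw)
          linarith
      rw [hsymm v u]
      calc ε * (n.choose k : ℝ) * w u v ≤ (N u v + N v u) * w u v :=
            mul_le_mul_of_nonneg_right hkey hw.le
        _ = N u v * w u v + N v u * w u v := by ring
  -- sum identity, dropping the diagonal
  have hdiag : ∀ u : V, N u u * w u u = 0 := by
    intro u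
    have : P.filter (fun S => u ∈ S ∧ u ∉ S) = ∅ := by
      apply filter_false_of_mem
      intro S _ h
      exact h.2 h.1
    rw [hN]; simp only []; rw [this]; simp
  have hsum : ∑ S ∈ P, cutVal w S = ∑ u, ∑ v ∈ univ.erase u, N u v * w u v := by
    rw [sum_cutVal w V' k]
    refine Finset.sum_congr rfl fun u _ => ?_
    rw [← Finset.sum_erase_add _ _ (mem_univ u), hdiag u, add_zero]
  -- symmetrization
  have hswap : ∀ g : V → V → ℝ,
      ∑ u, ∑ v ∈ univ.erase u, g u v = ∑ u, ∑ v ∈ univ.erase u, g v u := by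
    intro g
    refine Finset.sum_comm' fun x y => ?_
    simp only [mem_univ, mem_erase, true_and, and_true]
    exact ⟨fun h => Ne.symm h, fun h => Ne.symm h⟩
  -- main averaging inequality
  have hmain : (P.card : ℝ) * (ε * totalWeight w) ≤ ∑ S ∈ P, cutVal w S := by
    have hPcard : P.card = n.choose k := by rw [hP, card_powersetCard]
    have h2 : 2 * (∑ S ∈ P, cutVal w S)
        = ∑ u, ∑ v ∈ univ.erase u, (N u v * w u v + N v u * w v u) := by
      rw [hsum]
      rw [two_mul]
      nth_rewrite 2 [hswap (fun u v => N u v * w u v)]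
      rw [← Finset.sum_add_distrib]
      refine Finset.sum_congr rfl fun u _ => ?_
      rw [← Finset.sum_add_distrib]
    have h3 : ∑ u, ∑ v ∈ univ.erase u, ε * (n.choose k : ℝ) * w u v
        ≤ ∑ u, ∑ v ∈ univ.erase u, (N u v * w u v + N v u * w v u) := by
      refine Finset.sum_le_sum fun u _ => Finset.sum_le_sum fun v hv => ?_
      exact key2 u v (Ne.symm (mem_erase.1 hv).1)
    have h4 : ∑ u, ∑ v ∈ univ.erase u, ε * (n.choose k : ℝ) * w u v
        = ε * (n.choose k : ℝ) * (2 * totalWeight w) := by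
      rw [totalWeight]
      calc ∑ u, ∑ v ∈ univ.erase u, ε * (n.choose k : ℝ) * w u v
          = ε * (n.choose k : ℝ) * ∑ u, ∑ v ∈ univ.erase u, w u v := by
            rw [Finset.mul_sum]
            exact Finset.sum_congr rfl fun u _ => (Finset.mul_sum _ _ _).symm
        _ = ε * (n.choose k : ℝ) * (2 * ((∑ u, ∑ v ∈ univ.erase u, w u v) / 2)) := by ring
    rw [hPcard]
    rw [h4] at h3
    rw [← h2] at h3
    have heq : ((n.choose k : ℕ) : ℝ) * (ε * totalWeight w)
        = ε * (n.choose k : ℝ) * totalWeight w := by ring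
    rw [heq]
    linarith
  have hne : P.Nonempty := powersetCard_nonempty.2 hkn
  obtain ⟨S, hSP, hSle⟩ := Finset.exists_le_of_sum_le hne (by
    calc ∑ _S ∈ P, ε * totalWeight w = (P.card : ℝ) * (ε * totalWeight w) := by
          rw [Finset.sum_const, nsmul_eq_mul]
      _ ≤ ∑ S ∈ P, cutVal w S := hmain)
  rw [hP, mem_powersetCard] at hSP
  exact ⟨S, hSP.1, hSP.2, hSle⟩
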